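/- Let S : Ω ⇉ E be a closed-valued, nonempty-valued Effros measurable mapping and let X ⊆ L⁰(E) be a stable and sequentially closed set. Then there exist closed-valued, nonempty-valued Effros measurable mappings S_X : Ω ⇉ E and S_{X_S} : Ω ⇉ E such that the set of measurable selections of S_X equals X (i.e. X_{S_X} = X) and S_{X_S}(ω) = S(ω) for almost all ω (i.e. S = S_{X_S}). In particular, X ⊆ L⁰(E) is the set of measurable selections of some closed-valued Effros measurable mapping if and only if X is stable and sequentially closed. -/

import Mathlib

open MeasureTheory Filter Topology Set

namespace RandomSetPaper

variable {Ω E : Type*}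

/-- Effros measurability of a set-valued mapping `S : Ω ⇉ E`. -/
def EffrosMeasurable [MeasurableSpace Ω] [TopologicalSpace E] (S : Ω → Set E) : Prop :=
  ∀ O : Set E, IsOpen O → MeasurableSet {ω | (S ω ∩ O).Nonempty}

/-- The set of (a.e. classes of) measurable selections of `S`. -/
def Selections [MeasurableSpace Ω] [MeasurableSpace E] (μ : Measure Ω)
    (S : Ω → Set E) : Set (Ω → E) :=
  {f | Measurable f ∧ ∀ᵐ ω ∂μ, f ω ∈ S ω}

/-- A countable measurable partition of `Ω`, up to `μ`-null sets. -/
def IsPartitionAE [MeasurableSpace Ω] (μ : Measure Ω) (A : ℕ → Set Ω) : Prop :=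
  (∀ k, MeasurableSet (A k)) ∧ (∀ i j, i ≠ j → μ (A i ∩ A j) = 0) ∧ μ (⋃ k, A k)ᶜ = 0

/-- `f` is (a version of) the concatenation `Σₖ 1_{Aₖ} zₖ` of the sequence `z` along the
partition `A`, i.e. `f = z k` a.e. on `A k` for every `k`. -/
def IsConcatAE [MeasurableSpace Ω] (μ : Measure Ω) (A : ℕ → Set Ω)
    (z : ℕ → Ω → E) (f : Ω → E) : Prop :=
  ∀ k, ∀ᵐ ω ∂μ, ω ∈ A k → f ω = z k ω

/-- A stable subset of `L⁰(E)` (identified with a μ-a.e.-saturated set of measurable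
functions): nonempty and closed under countable concatenations along measurable
partitions. -/
def StableFnSet [MeasurableSpace Ω] [MeasurableSpace E] (μ : Measure Ω)
    (X : Set (Ω → E)) : Prop :=
  X.Nonempty ∧ ∀ (A : ℕ → Set Ω), IsPartitionAE μ A → ∀ z : ℕ → Ω → E,
    (∀ k, z k ∈ X) → ∀ f : Ω → E, Measurable f → IsConcatAE μ A z f → f ∈ X

/-- A sequentially closed subset of `L⁰(E)`: closed under a.s. limits. -/
def SeqClosedFnSet [MeasurableSpace Ω] [MeasurableSpace E] [TopologicalSpace E]
    (μ : Measure Ω) (X : Set (Ω → E)) : Prop :=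
  ∀ x : ℕ → Ω → E, (∀ n, x n ∈ X) → ∀ f : Ω → E, Measurable f →
    (∀ᵐ ω ∂μ, Tendsto (fun n => x n ω) atTop (nhds (f ω))) → f ∈ X

end RandomSetPaper

namespace RandomSetPaper

section Aux

variable [MeasurableSpace Ω] [MetricSpace E] [MeasurableSpace E] [BorelSpace E]

set_option linter.unusedSectionVars false

lemma measurable_infDist {S : Ω → Set E} (hSne : ∀ ω, (S ω).Nonempty)
    (hS : EffrosMeasurable S) (e : E) :
    Measurable fun ω => Metric.infDist e (S ω) := by
  apply measurable_of_Iio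
  intro r
  have h : (fun ω => Metric.infDist e (S ω)) ⁻¹' Iio r
      = {ω | (S ω ∩ Metric.ball e r).Nonempty} := by
    ext ω
    simp only [mem_preimage, mem_Iio, mem_setOf_eq]
    rw [Metric.infDist_lt_iff (hSne ω)]
    constructor
    · rintro ⟨y, hy, hd⟩
      exact ⟨y, hy, by simpa [Metric.mem_ball, dist_comm] using hd⟩
    · rintro ⟨y, hy, hd⟩
      exact ⟨y, hy, by simpa [Metric.mem_ball, dist_comm] using hd⟩
  rw [h]
  exact hS _ Metric.isOpen_ball

lemma measurable_natFind {p : ℕ → Ω → Prop} [∀ i ω, Decidable (p i ω)]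
    (hp : ∀ i, MeasurableSet {ω | p i ω}) (hex : ∀ ω, ∃ i, p i ω) :
    Measurable fun ω => Nat.find (hex ω) := by
  apply measurable_to_countable'
  intro i
  have h : (fun ω => Nat.find (hex ω)) ⁻¹' {i}
      = {ω | p i ω} ∩ ⋂ j, ⋂ _ : j < i, {ω | p j ω}ᶜ := by
    ext ω
    simp only [mem_preimage, mem_singleton_iff, Nat.find_eq_iff (hex ω), mem_inter_iff,
      mem_setOf_eq, mem_iInter, mem_compl_iff]
  rw [h]
  exact (hp i).inter (MeasurableSet.iInter fun j => MeasurableSet.iInter fun _ => (hp j).compl)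

variable [CompleteSpace E] [TopologicalSpace.SeparableSpace E]

lemma exists_selection_near {S : Ω → Set E} (hcl : ∀ ω, IsClosed (S ω))
    (hSne : ∀ ω, (S ω).Nonempty) (hS : EffrosMeasurable S)
    (u : ℕ → E) (hu : DenseRange u) (h : Ω → E) (hh : Measurable h) (n : ℕ)
    (hd : ∀ ω, Metric.infDist (h ω) (S ω) < (1 / 2 : ℝ) ^ n) :
    ∃ g : Ω → E, Measurable g ∧ (∀ ω, g ω ∈ S ω) ∧
      ∀ ω, dist (g ω) (h ω) ≤ 3 * (1 / 2 : ℝ) ^ n := by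
  classical
  haveI : SecondCountableTopology E := UniformSpace.secondCountable_of_separable E
  have hstep : ∀ (k : ℕ) (x : Ω → E), (∀ ω, Metric.infDist (x ω) (S ω) < (1/2:ℝ) ^ (n + k)) →
      ∀ ω, ∃ i, Metric.infDist (u i) (S ω) < (1/2:ℝ) ^ (n + k + 1) ∧
        dist (u i) (x ω) < 3 * (1/2:ℝ) ^ (n + k + 1) := by
    intro k x hx ω
    obtain ⟨s, hs, hds⟩ := (Metric.infDist_lt_iff (hSne ω)).1 (hx ω)
    obtain ⟨i, hi⟩ := Metric.denseRange_iff.1 hu s ((1/2:ℝ) ^ (n + k + 1)) (by positivity)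
    refine ⟨i, lt_of_le_of_lt (Metric.infDist_le_dist_of_mem hs) ?_, ?_⟩
    · rw [dist_comm]; exact hi
    · calc dist (u i) (x ω) ≤ dist (u i) s + dist s (x ω) := dist_triangle _ _ _
        _ < (1/2:ℝ)^(n+k+1) + (1/2:ℝ)^(n+k) := by
            refine add_lt_add ?_ ?_
            · rw [dist_comm]; exact hi
            · rw [dist_comm]; exact hds
        _ = 3 * (1/2:ℝ)^(n+k+1) := by rw [pow_succ]; ring
  let step : ℕ → (Ω → E) → Ω → E := fun k x ω =>
    if hex : ∃ i, Metric.infDist (u i) (S ω) < (1/2:ℝ) ^ (n + k + 1) ∧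
        dist (u i) (x ω) < 3 * (1/2:ℝ) ^ (n + k + 1)
    then u (Nat.find hex) else x ω
  let f : ℕ → Ω → E := fun k => Nat.rec h (fun k ih => step k ih) k
  have hfs : ∀ k, f (k + 1) = step k (f k) := fun k => rfl
  have hinv : ∀ k, Measurable (f k) ∧
      (∀ ω, Metric.infDist (f k ω) (S ω) < (1/2:ℝ) ^ (n + k)) := by
    intro k
    induction k with
    | zero => exact ⟨hh, by simpa [f] using hd⟩
    | succ k ih =>
      obtain ⟨ihm, ihd⟩ := ih
      have hex : ∀ ω, ∃ i, Metric.infDist (u i) (S ω) < (1/2:ℝ) ^ (n + k + 1) ∧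
          dist (u i) (f k ω) < 3 * (1/2:ℝ) ^ (n + k + 1) := hstep k (f k) ihd
      have hfk : f (k+1) = fun ω => u (Nat.find (hex ω)) := by
        funext ω
        rw [hfs k]
        exact dif_pos (hex ω)
      have hpm : ∀ i : ℕ, MeasurableSet {ω | Metric.infDist (u i) (S ω) < (1/2:ℝ) ^ (n + k + 1) ∧
          dist (u i) (f k ω) < 3 * (1/2:ℝ) ^ (n + k + 1)} := by
        intro i
        rw [setOf_and]
        exact (measurableSet_lt (measurable_infDist hSne hS (u i)) measurable_const).inter
          (measurableSet_lt (measurable_const.dist ihm) measurable_const)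
      refine ⟨?_, ?_⟩
      · rw [hfk]
        exact measurable_from_top.comp (measurable_natFind hpm hex)
      · intro ω
        rw [hfk]
        exact (Nat.find_spec (hex ω)).1
  have hdist : ∀ k ω, dist (f (k+1) ω) (f k ω) ≤ 3 * (1/2:ℝ) ^ (n + k + 1) := by
    intro k ω
    have hex : ∀ ω, ∃ i, Metric.infDist (u i) (S ω) < (1/2:ℝ) ^ (n + k + 1) ∧
        dist (u i) (f k ω) < 3 * (1/2:ℝ) ^ (n + k + 1) := hstep k (f k) (hinv k).2
    have hfk : f (k+1) ω = u (Nat.find (hex ω)) := by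
      rw [hfs k]
      exact dif_pos (hex ω)
    rw [hfk]
    exact le_of_lt (Nat.find_spec (hex ω)).2
  have hgeom : ∀ ω k, dist (f k ω) (f (k+1) ω) ≤ (3 * (1/2:ℝ)^(n+1)) * (1/2:ℝ) ^ k := by
    intro ω k
    rw [dist_comm]
    refine (hdist k ω).trans (le_of_eq ?_)
    rw [show n + k + 1 = (n+1) + k by omega, pow_add]
    ring
  have hg : ∀ ω, ∃ a, Tendsto (fun k => f k ω) atTop (𝓝 a) := by
    intro ω
    apply cauchySeq_tendsto_of_complete
    exact cauchySeq_of_le_geometric (1/2 : ℝ) (3 * (1/2:ℝ)^(n+1)) (by norm_num) (hgeom ω)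
  choose g hgt using hg
  have hgm : Measurable g :=
    measurable_of_tendsto_metrizable (fun k => (hinv k).1) (tendsto_pi_nhds.2 hgt)
  refine ⟨g, hgm, ?_, ?_⟩
  · intro ω
    have hcont : Tendsto (fun k => Metric.infDist (f k ω) (S ω)) atTop
        (𝓝 (Metric.infDist (g ω) (S ω))) :=
      ((Metric.continuous_infDist_pt (S ω)).tendsto (g ω)).comp (hgt ω)
    have hb : Tendsto (fun k : ℕ => (1/2:ℝ)^n * (1/2:ℝ)^k) atTop (𝓝 0) := by
      have := (tendsto_pow_atTop_nhds_zero_of_lt_one (by norm_num : (0:ℝ) ≤ 1/2)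
        (by norm_num : (1/2:ℝ) < 1)).const_mul ((1/2:ℝ)^n)
      simpa using this
    have hle : Metric.infDist (g ω) (S ω) ≤ 0 := by
      refine le_of_tendsto_of_tendsto hcont hb (Eventually.of_forall fun k => ?_)
      have := le_of_lt ((hinv k).2 ω)
      rwa [pow_add] at this
    exact ((hcl ω).mem_iff_infDist_zero (hSne ω)).2
      (le_antisymm hle Metric.infDist_nonneg)
  · intro ω
    have h0 := dist_le_of_le_geometric_of_tendsto (r := (1/2:ℝ)) (C := 3 * (1/2:ℝ)^(n+1))
      (by norm_num) (hgeom ω) (hgt ω) 0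
    have : dist (f 0 ω) (g ω) ≤ 3 * (1/2:ℝ)^n := by
      refine h0.trans (le_of_eq ?_)
      rw [pow_succ]
      ring
    rw [dist_comm]
    exact this

lemma exists_selection {S : Ω → Set E} (hcl : ∀ ω, IsClosed (S ω))
    (hSne : ∀ ω, (S ω).Nonempty) (hS : EffrosMeasurable S) [Nonempty E] :
    ∃ g : Ω → E, Measurable g ∧ ∀ ω, g ω ∈ S ω := by
  classical
  obtain ⟨u, hu⟩ := TopologicalSpace.exists_dense_seq E
  have hex : ∀ ω, ∃ i, Metric.infDist (u i) (S ω) < (1/2:ℝ) ^ 1 := by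
    intro ω
    obtain ⟨s, hs⟩ := hSne ω
    obtain ⟨i, hi⟩ := Metric.denseRange_iff.1 hu s ((1/2:ℝ) ^ 1) (by norm_num)
    exact ⟨i, lt_of_le_of_lt (Metric.infDist_le_dist_of_mem hs) (by rw [dist_comm]; exact hi)⟩
  have hh : Measurable fun ω => u (Nat.find (hex ω)) :=
    measurable_from_top.comp (measurable_natFind
      (fun i => measurableSet_lt (measurable_infDist hSne hS (u i)) measurable_const) hex)
  obtain ⟨g, hgm, hgmem, -⟩ := exists_selection_near hcl hSne hS u hu _ hh 1
    (fun ω => (Nat.find_spec (hex ω)))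
  exact ⟨g, hgm, hgmem⟩

lemma exists_castaing {S : Ω → Set E} (hcl : ∀ ω, IsClosed (S ω))
    (hSne : ∀ ω, (S ω).Nonempty) (hS : EffrosMeasurable S) [Nonempty E] :
    ∃ g : ℕ × ℕ → Ω → E, (∀ p, Measurable (g p)) ∧ (∀ p ω, g p ω ∈ S ω) ∧
      ∀ ω, S ω = closure (Set.range fun p => g p ω) := by
  classical
  obtain ⟨u, hu⟩ := TopologicalSpace.exists_dense_seq E
  obtain ⟨g₀, hg₀m, hg₀⟩ := exists_selection hcl hSne hS
  have key : ∀ i n : ℕ, ∃ g : Ω → E, Measurable g ∧ (∀ ω, g ω ∈ S ω) ∧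
      ∀ ω, Metric.infDist (u i) (S ω) < (1/2:ℝ) ^ n → dist (g ω) (u i) ≤ 3 * (1/2:ℝ) ^ n := by
    intro i n
    set h : Ω → E := fun ω => if Metric.infDist (u i) (S ω) < (1/2:ℝ) ^ n then u i else g₀ ω
      with hh_def
    have hhm : Measurable h :=
      Measurable.ite (measurableSet_lt (measurable_infDist hSne hS (u i)) measurable_const)
        measurable_const hg₀m
    have hhd : ∀ ω, Metric.infDist (h ω) (S ω) < (1/2:ℝ) ^ n := by
      intro ω
      by_cases hc : Metric.infDist (u i) (S ω) < (1/2:ℝ) ^ n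
      · have : h ω = u i := if_pos hc
        rw [this]; exact hc
      · have : h ω = g₀ ω := if_neg hc
        rw [this, Metric.infDist_zero_of_mem (hg₀ ω)]
        positivity
    obtain ⟨g, hgm, hgmem, hgd⟩ := exists_selection_near hcl hSne hS u hu h hhm n hhd
    refine ⟨g, hgm, hgmem, fun ω hc => ?_⟩
    have he : h ω = u i := if_pos hc
    calc dist (g ω) (u i) = dist (g ω) (h ω) := by rw [he]
      _ ≤ 3 * (1/2:ℝ) ^ n := hgd ω
  choose G hGm hGmem hGd using key
  refine ⟨fun p => G p.1 p.2, fun p => hGm p.1 p.2, fun p ω => hGmem p.1 p.2 ω, fun ω => ?_⟩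
  apply Subset.antisymm
  · intro s hs
    rw [Metric.mem_closure_iff]
    intro ε hε
    obtain ⟨m, hm⟩ := exists_pow_lt_of_lt_one (show (0:ℝ) < ε/5 by linarith)
      (show (1/2:ℝ) < 1 by norm_num)
    obtain ⟨i, hi⟩ := Metric.denseRange_iff.1 hu s ((1/2:ℝ) ^ m) (by positivity)
    have hinf : Metric.infDist (u i) (S ω) < (1/2:ℝ) ^ m :=
      lt_of_le_of_lt (Metric.infDist_le_dist_of_mem hs) (by rw [dist_comm]; exact hi)
    refine ⟨G i m ω, ⟨(i, m), rfl⟩, ?_⟩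
    calc dist s (G i m ω) ≤ dist s (u i) + dist (u i) (G i m ω) := dist_triangle _ _ _
      _ ≤ (1/2:ℝ)^m + 3 * (1/2:ℝ)^m :=
          add_le_add (le_of_lt hi) (by rw [dist_comm]; exact hGd i m ω hinf)
      _ = 4 * (1/2:ℝ)^m := by ring
      _ < ε := by linarith
  · exact closure_minimal (range_subset_iff.2 fun p => hGmem p.1 p.2 ω) (hcl ω)

end Aux

section Aux2

variable [MeasurableSpace Ω] [MeasurableSpace E]

set_option linter.unusedSectionVars false

lemma paste_mem {μ : Measure Ω} {X : Set (Ω → E)} (hXmeas : ∀ f ∈ X, Measurable f)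
    (hXstable : StableFnSet μ X) (z : ℕ → Ω → E) (hz : ∀ k, z k ∈ X)
    (P : ℕ → Set Ω) (hP : ∀ m, MeasurableSet (P m)) :
    ∃ f : Ω → E, f ∈ X ∧ Measurable f ∧
      (∀ ω m, ω ∈ P m → (∀ j, j < m → ω ∉ P j) → f ω = z m ω) ∧
      (∀ ω, (∀ m, ω ∉ P m) → f ω = z 0 ω) := by
  classical
  set Q : ℕ → Set Ω := fun m => if m = 0 then P 0 ∪ (⋃ k, P k)ᶜ else P m with hQ
  have hQm : ∀ m, MeasurableSet (Q m) := by
    intro m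
    by_cases h0 : m = 0
    · subst h0
      simp only [hQ, if_pos rfl]
      exact (hP 0).union (MeasurableSet.iUnion hP).compl
    · simp only [hQ, if_neg h0]
      exact hP m
  have hexQ : ∀ ω, ∃ m, ω ∈ Q m := by
    intro ω
    by_cases hc : ∃ k, ω ∈ P k
    · obtain ⟨k, hk⟩ := hc
      by_cases h0 : k = 0
      · subst h0
        exact ⟨0, by simp only [hQ, if_pos rfl]; exact Or.inl hk⟩
      · exact ⟨k, by simp only [hQ, if_neg h0]; exact hk⟩
    · refine ⟨0, ?_⟩
      simp only [hQ, if_pos rfl]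
      right
      simp only [mem_compl_iff, mem_iUnion]
      exact hc
  set idx : Ω → ℕ := fun ω => Nat.find (hexQ ω) with hidx
  have hidxm : Measurable idx := by
    apply measurable_natFind (p := fun m ω => ω ∈ Q m) (fun i => ?_) hexQ
    simpa using hQm i
  set f : Ω → E := fun ω => z (idx ω) ω with hf
  have hfm : Measurable f := by
    intro s hs
    have hset : f ⁻¹' s = ⋃ m, idx ⁻¹' {m} ∩ z m ⁻¹' s := by
      ext ω
      simp only [hf, mem_preimage, mem_iUnion, mem_inter_iff, mem_singleton_iff]
      constructor
      · intro hmem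
        exact ⟨idx ω, rfl, hmem⟩
      · rintro ⟨m, hm, hmem⟩
        rw [hm]
        exact hmem
    rw [hset]
    exact MeasurableSet.iUnion fun m =>
      (hidxm (measurableSet_singleton m)).inter (hXmeas _ (hz m) hs)
  have hkey : ∀ ω m, ω ∈ P m → (∀ j, j < m → ω ∉ P j) → idx ω = m := by
    intro ω m hm hj
    refine (Nat.find_eq_iff (hexQ ω)).2 ⟨?_, ?_⟩
    · by_cases h0 : m = 0
      · subst h0
        simp only [hQ, if_pos rfl]
        exact Or.inl hm
      · simp only [hQ, if_neg h0]
        exact hm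
    · intro j hjm
      have hj' := hj j hjm
      by_cases h0 : j = 0
      · subst h0
        simp only [hQ, if_pos rfl]
        rintro (hc | hc)
        · exact hj' hc
        · exact hc (mem_iUnion.2 ⟨m, hm⟩)
      · simp only [hQ, if_neg h0]
        exact hj'
  have hrem : ∀ ω, (∀ m, ω ∉ P m) → idx ω = 0 := by
    intro ω hω
    refine (Nat.find_eq_iff (hexQ ω)).2 ⟨?_, fun j hj => absurd hj (Nat.not_lt_zero j)⟩
    simp only [hQ, if_pos rfl]
    right
    simp only [mem_compl_iff, mem_iUnion, not_exists]
    exact hω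
  have hfX : f ∈ X := by
    refine hXstable.2 (fun m => idx ⁻¹' {m}) ⟨fun m => hidxm (measurableSet_singleton m),
      ?_, ?_⟩ z hz f hfm ?_
    · intro i j hij
      have hempty : idx ⁻¹' {i} ∩ idx ⁻¹' {j} = ∅ := by
        ext ω
        simp only [mem_inter_iff, mem_preimage, mem_singleton_iff, mem_empty_iff_false,
          iff_false, not_and]
        intro h1 h2
        exact hij (h1 ▸ h2 ▸ rfl)
      rw [hempty, measure_empty]
    · have huniv : (⋃ m, idx ⁻¹' {m}) = univ := by
        ext ω
        simp only [mem_iUnion, mem_preimage, mem_singleton_iff, mem_univ, iff_true]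
        exact ⟨idx ω, rfl⟩
      rw [huniv, compl_univ, measure_empty]
    · intro k
      refine Eventually.of_forall fun ω hω => ?_
      have : idx ω = k := hω
      simp only [hf]
      rw [this]
  refine ⟨f, hfX, hfm, ?_, ?_⟩
  · intro ω m hm hj
    simp only [hf]
    rw [hkey ω m hm hj]
  · intro ω hω
    simp only [hf]
    rw [hrem ω hω]

lemma exists_maximal_preimage [MetricSpace E] [BorelSpace E]
    {μ : Measure Ω} [IsProbabilityMeasure μ] {X : Set (Ω → E)}
    (hXmeas : ∀ f ∈ X, Measurable f) (hXstable : StableFnSet μ X)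
    (K : Set E) (hK : MeasurableSet K) :
    ∃ g, g ∈ X ∧ Measurable g ∧ ∀ x ∈ X, μ (x ⁻¹' K \ g ⁻¹' K) = 0 := by
  classical
  set c := sSup ((fun x : Ω → E => μ (x ⁻¹' K)) '' X) with hc
  have himg : ((fun x : Ω → E => μ (x ⁻¹' K)) '' X).Nonempty := hXstable.1.image _
  obtain ⟨v, -, hvt, hvmem⟩ := exists_seq_tendsto_sSup himg (OrderTop.bddAbove _)
  choose xs hxsX hxs using fun m => (Set.mem_image _ _ _).1 (hvmem m)
  obtain ⟨g, hgX, hgm, hg1, hg2⟩ := paste_mem hXmeas hXstable xs hxsX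
    (fun m => xs m ⁻¹' K) (fun m => hXmeas _ (hxsX m) hK)
  have hsub : ∀ m, xs m ⁻¹' K ⊆ g ⁻¹' K := by
    intro m ω hω
    have hex : ∃ j, ω ∈ xs j ⁻¹' K := ⟨m, hω⟩
    have heq := hg1 ω (Nat.find hex) (Nat.find_spec hex) (fun j hj => Nat.find_min hex hj)
    have : g ω ∈ K := by
      rw [heq]
      exact Nat.find_spec hex
    exact this
  have hgc : μ (g ⁻¹' K) = c := by
    apply le_antisymm
    · exact le_sSup (mem_image_of_mem _ hgX)
    · refine le_of_tendsto hvt (Eventually.of_forall fun m => ?_)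
      rw [← hxs m]
      exact measure_mono (hsub m)
  have hcne : c ≠ ⊤ := by
    have hle1 : c ≤ 1 := by
      refine sSup_le ?_
      rintro _ ⟨x, -, rfl⟩
      exact prob_le_one
    exact (hle1.trans_lt ENNReal.one_lt_top).ne
  refine ⟨g, hgX, hgm, ?_⟩
  intro x hx
  set P : ℕ → Set Ω := fun m => if m = 0 then x ⁻¹' K \ g ⁻¹' K else univ with hPdef
  obtain ⟨h, hhX, -, hh1, -⟩ := paste_mem hXmeas hXstable (fun m => if m = 0 then x else g)
    (fun m => by by_cases h0 : m = 0 <;> simp only [h0, if_pos, if_neg, if_true] <;>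
      first | exact hx | simp [hgX])
    P (fun m => by
      by_cases h0 : m = 0
      · simp only [hPdef, h0, if_pos rfl]
        exact (hXmeas x hx hK).diff (hXmeas g hgX hK)
      · simp only [hPdef, if_neg h0]
        exact MeasurableSet.univ)
  have hsub2 : (x ⁻¹' K \ g ⁻¹' K) ∪ g ⁻¹' K ⊆ h ⁻¹' K := by
    intro ω hω
    by_cases h0 : ω ∈ P 0
    · have heq := hh1 ω 0 h0 (fun j hj => absurd hj (Nat.not_lt_zero j))
      have hωx : ω ∈ x ⁻¹' K := by
        have h0' : ω ∈ x ⁻¹' K \ g ⁻¹' K := by simpa only [hPdef, if_pos rfl] using h0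
        exact h0'.1
      show h ω ∈ K
      rw [heq]
      exact hωx
    · have hj : ∀ j, j < 1 → ω ∉ P j := by
        intro j hj1
        have : j = 0 := by omega
        rw [this]
        exact h0
      have h1 : ω ∈ P 1 := by simp [hPdef]
      have heq := hh1 ω 1 h1 hj
      have hωg : ω ∈ g ⁻¹' K := by
        rcases hω with hω | hω
        · exact absurd (by simpa only [hPdef, if_pos rfl] using hω) h0
        · exact hω
      show h ω ∈ K
      rw [heq]
      exact hωg
  have hdisj : Disjoint (x ⁻¹' K \ g ⁻¹' K) (g ⁻¹' K) := disjoint_sdiff_left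
  have hsum : μ (x ⁻¹' K \ g ⁻¹' K) + μ (g ⁻¹' K) ≤ c := by
    rw [← measure_union hdisj (hXmeas g hgX hK)]
    exact (measure_mono hsub2).trans (le_sSup (mem_image_of_mem _ hhX))
  rw [hgc] at hsum
  have hfin : μ (x ⁻¹' K \ g ⁻¹' K) ≤ 0 := by
    refine (ENNReal.add_le_add_iff_right hcne).1 ?_
    rwa [zero_add]
  exact le_antisymm hfin zero_le

end Aux2


section Aux3

variable [MeasurableSpace Ω] [MetricSpace E] [TopologicalSpace.SeparableSpace E]
  [CompleteSpace E] [MeasurableSpace E] [BorelSpace E]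

set_option linter.unusedSectionVars false

lemma exists_representation {μ : Measure Ω} [IsProbabilityMeasure μ] {X : Set (Ω → E)}
    (hXmeas : ∀ f ∈ X, Measurable f) (hXstable : StableFnSet μ X)
    (hXseq : SeqClosedFnSet μ X) :
    ∃ SX : Ω → Set E, (∀ ω, IsClosed (SX ω)) ∧ (∀ ω, (SX ω).Nonempty) ∧
      EffrosMeasurable SX ∧ Selections μ SX = X := by
  classical
  obtain ⟨x₀, hx₀⟩ := hXstable.1
  have hΩ : Nonempty Ω := by
    by_contra hc
    rw [not_nonempty_iff] at hc
    have h1 : μ univ = 1 := measure_univ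
    rw [Set.univ_eq_empty_iff.2 hc, measure_empty] at h1
    exact zero_ne_one h1
  haveI := hΩ
  haveI : Nonempty E := ⟨x₀ hΩ.some⟩
  obtain ⟨u, hu⟩ := TopologicalSpace.exists_dense_seq E
  have key : ∀ i n : ℕ, ∃ g, g ∈ X ∧ Measurable g ∧
      ∀ x ∈ X, μ (x ⁻¹' Metric.closedBall (u i) ((1/2:ℝ)^n) \
        g ⁻¹' Metric.closedBall (u i) ((1/2:ℝ)^n)) = 0 :=
    fun i n => exists_maximal_preimage hXmeas hXstable _ measurableSet_closedBall
  choose g hgX hgm hgmax using key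
  set SX : Ω → Set E := fun ω => closure (Set.range fun p : ℕ × ℕ => g p.1 p.2 ω) with hSX
  refine ⟨SX, fun ω => isClosed_closure, fun ω => ⟨g 0 0 ω, subset_closure ⟨(0,0), rfl⟩⟩, ?_, ?_⟩
  · intro O hO
    have hset : {ω | (SX ω ∩ O).Nonempty} = ⋃ i, ⋃ n, (g i n) ⁻¹' O := by
      ext ω
      simp only [hSX, mem_setOf_eq, mem_iUnion, mem_preimage]
      constructor
      · rintro ⟨e, hecl, heO⟩
        obtain ⟨e', he'O, he'r⟩ := (_root_.mem_closure_iff.1 hecl) O hO heO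
        obtain ⟨⟨a, b⟩, hab⟩ := he'r
        exact ⟨a, b, by rw [show g a b ω = e' from hab]; exact he'O⟩
      · rintro ⟨i, n, hin⟩
        exact ⟨g i n ω, subset_closure ⟨(i, n), rfl⟩, hin⟩
    rw [hset]
    exact MeasurableSet.iUnion fun i => MeasurableSet.iUnion fun n => hgm i n hO.measurableSet
  · apply Subset.antisymm
    · rintro f ⟨hfm, hfae⟩
      have hyn : ∀ n : ℕ, ∃ y, y ∈ X ∧ ∀ᵐ ω ∂μ, dist (y ω) (f ω) ≤ 2 * (1/2:ℝ)^n := by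
        intro n
        obtain ⟨y, hyX, hym, hy1, -⟩ := paste_mem hXmeas hXstable (fun i => g i n)
          (fun i => hgX i n) (fun i => f ⁻¹' Metric.ball (u i) ((1/2:ℝ)^n))
          (fun i => hfm Metric.isOpen_ball.measurableSet)
        refine ⟨y, hyX, ?_⟩
        have hnull : ∀ᵐ ω ∂μ, ∀ (p : ℕ × ℕ) (i : ℕ),
            ω ∉ (g p.1 p.2) ⁻¹' Metric.closedBall (u i) ((1/2:ℝ)^n) \
              (g i n) ⁻¹' Metric.closedBall (u i) ((1/2:ℝ)^n) := by
          rw [ae_all_iff]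
          intro p
          rw [ae_all_iff]
          intro i
          exact measure_eq_zero_iff_ae_notMem.1 (hgmax i n _ (hgX p.1 p.2))
        filter_upwards [hfae, hnull] with ω hωS hωN
        have hωS' : f ω ∈ closure (Set.range fun p : ℕ × ℕ => g p.1 p.2 ω) := hωS
        have hexi : ∃ i, ω ∈ f ⁻¹' Metric.ball (u i) ((1/2:ℝ)^n) := by
          obtain ⟨i, hi⟩ := Metric.denseRange_iff.1 hu (f ω) ((1/2:ℝ)^n) (by positivity)
          exact ⟨i, by simpa [Metric.mem_ball] using hi⟩
        set i₀ := Nat.find hexi with hi₀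
        have hyeq : y ω = g i₀ n ω :=
          hy1 ω i₀ (Nat.find_spec hexi) (fun j hj => Nat.find_min hexi hj)
        have hfball : dist (f ω) (u i₀) < (1/2:ℝ)^n := by
          have h := Nat.find_spec hexi
          rw [← hi₀] at h
          simpa [Metric.mem_ball] using h
        have hεpos : (0:ℝ) < (1/2:ℝ)^n - dist (f ω) (u i₀) := by linarith
        obtain ⟨e', he'mem, he'd⟩ := Metric.mem_closure_iff.1 hωS' _ hεpos
        obtain ⟨⟨a, b⟩, hab⟩ := he'mem
        have hclose : g a b ω ∈ Metric.closedBall (u i₀) ((1/2:ℝ)^n) := by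
          rw [Metric.mem_closedBall]
          have h1 : dist (g a b ω) (f ω) < (1/2:ℝ)^n - dist (f ω) (u i₀) := by
            rw [show g a b ω = e' from hab, dist_comm]
            exact he'd
          calc dist (g a b ω) (u i₀) ≤ dist (g a b ω) (f ω) + dist (f ω) (u i₀) :=
                dist_triangle _ _ _
            _ ≤ (1/2:ℝ)^n := by linarith
        have hgball : g i₀ n ω ∈ Metric.closedBall (u i₀) ((1/2:ℝ)^n) := by
          by_contra hc
          exact hωN (a, b) i₀ ⟨hclose, hc⟩
        rw [hyeq]
        calc dist (g i₀ n ω) (f ω) ≤ dist (g i₀ n ω) (u i₀) + dist (u i₀) (f ω) :=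
              dist_triangle _ _ _
          _ ≤ (1/2:ℝ)^n + (1/2:ℝ)^n := add_le_add
              (by simpa [Metric.mem_closedBall] using hgball)
              (by rw [dist_comm]; exact le_of_lt hfball)
          _ = 2 * (1/2:ℝ)^n := by ring
      choose ys hysX hysae using hyn
      refine hXseq ys hysX f hfm ?_
      have hall : ∀ᵐ ω ∂μ, ∀ n, dist (ys n ω) (f ω) ≤ 2 * (1/2:ℝ)^n := ae_all_iff.2 hysae
      filter_upwards [hall] with ω hω
      rw [tendsto_iff_dist_tendsto_zero]
      refine squeeze_zero (fun n => dist_nonneg) hω ?_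
      have := (tendsto_pow_atTop_nhds_zero_of_lt_one (by norm_num : (0:ℝ) ≤ 1/2)
        (by norm_num : (1/2:ℝ) < 1)).const_mul (2:ℝ)
      simpa using this
    · intro x hx
      refine ⟨hXmeas x hx, ?_⟩
      have hnull : ∀ᵐ ω ∂μ, ∀ i n : ℕ,
          ω ∉ x ⁻¹' Metric.closedBall (u i) ((1/2:ℝ)^n) \
            (g i n) ⁻¹' Metric.closedBall (u i) ((1/2:ℝ)^n) := by
        rw [ae_all_iff]
        intro i
        rw [ae_all_iff]
        intro n
        exact measure_eq_zero_iff_ae_notMem.1 (hgmax i n x hx)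
      filter_upwards [hnull] with ω hω
      show x ω ∈ closure (Set.range fun p : ℕ × ℕ => g p.1 p.2 ω)
      rw [Metric.mem_closure_iff]
      intro ε hε
      obtain ⟨m, hm⟩ := exists_pow_lt_of_lt_one (show (0:ℝ) < ε/3 by linarith)
        (show (1/2:ℝ) < 1 by norm_num)
      obtain ⟨i, hi⟩ := Metric.denseRange_iff.1 hu (x ω) ((1/2:ℝ)^m) (by positivity)
      have hxball : ω ∈ x ⁻¹' Metric.closedBall (u i) ((1/2:ℝ)^m) := by
        simp only [mem_preimage, Metric.mem_closedBall]
        exact le_of_lt hi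
      have hgball : ω ∈ (g i m) ⁻¹' Metric.closedBall (u i) ((1/2:ℝ)^m) := by
        by_contra hc
        exact hω i m ⟨hxball, hc⟩
      refine ⟨g i m ω, ⟨(i, m), rfl⟩, ?_⟩
      calc dist (x ω) (g i m ω) ≤ dist (x ω) (u i) + dist (u i) (g i m ω) := dist_triangle _ _ _
        _ ≤ (1/2:ℝ)^m + (1/2:ℝ)^m := add_le_add (le_of_lt hi)
            (by rw [dist_comm]; simpa [Metric.mem_closedBall] using hgball)
        _ < ε := by linarith

end Aux3


/-- **Theorem 5.3 (correspondence between random sets and stable sequentially closed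
sets).** Let `S : Ω ⇉ E` be closed-valued, nonempty-valued and Effros measurable, and let
`X ⊆ L⁰(E)` be stable and sequentially closed. Then (1) there is a closed-valued,
nonempty-valued Effros measurable `S_X` whose set of measurable selections is exactly `X`
(`X_{S_X} = X`); (2) any closed-valued, nonempty-valued Effros measurable mapping with the
same selections as `S` coincides a.s. with `S` (this is `S = S_{X_S}`); and (3) in
particular, a set `Y ⊆ L⁰(E)` is the set of measurable selections of some closed-valued,
nonempty-valued Effros measurable mapping iff `Y` is stable and sequentially closed. -/
theorem selections_correspondence {Ω E : Type*} [MeasurableSpace Ω]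
    {μ : Measure Ω} [IsProbabilityMeasure μ] [μ.IsComplete]
    [MetricSpace E] [TopologicalSpace.SeparableSpace E] [CompleteSpace E]
    [MeasurableSpace E] [BorelSpace E]
    (S : Ω → Set E) (hSclosed : ∀ ω, IsClosed (S ω)) (hSne : ∀ ω, (S ω).Nonempty)
    (hSEffros : EffrosMeasurable S)
    (X : Set (Ω → E)) (hXmeas : ∀ f ∈ X, Measurable f)
    (hXsat : ∀ f ∈ X, ∀ g : Ω → E, Measurable g → f =ᵐ[μ] g → g ∈ X)
    (hXstable : StableFnSet μ X) (hXseqclosed : SeqClosedFnSet μ X) :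
    (∃ SX : Ω → Set E, (∀ ω, IsClosed (SX ω)) ∧ (∀ ω, (SX ω).Nonempty) ∧
      EffrosMeasurable SX ∧ Selections μ SX = X) ∧
    (∀ T : Ω → Set E, (∀ ω, IsClosed (T ω)) → (∀ ω, (T ω).Nonempty) →
      EffrosMeasurable T → Selections μ T = Selections μ S → ∀ᵐ ω ∂μ, T ω = S ω) ∧
    (∀ Y : Set (Ω → E), (∀ f ∈ Y, Measurable f) →
      (∀ f ∈ Y, ∀ g : Ω → E, Measurable g → f =ᵐ[μ] g → g ∈ Y) →
      ((∃ T : Ω → Set E, (∀ ω, IsClosed (T ω)) ∧ (∀ ω, (T ω).Nonempty) ∧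
          EffrosMeasurable T ∧ Selections μ T = Y) ↔
        (StableFnSet μ Y ∧ SeqClosedFnSet μ Y))) := by
  classical
  have hΩ : Nonempty Ω := by
    by_contra hc
    rw [not_nonempty_iff] at hc
    have h1 : μ univ = 1 := measure_univ
    rw [Set.univ_eq_empty_iff.2 hc, measure_empty] at h1
    exact zero_ne_one h1
  haveI := hΩ
  haveI : Nonempty E := ⟨(hSne hΩ.some).some⟩
  have part2 : ∀ T : Ω → Set E, (∀ ω, IsClosed (T ω)) → (∀ ω, (T ω).Nonempty) →
      EffrosMeasurable T → Selections μ T = Selections μ S → ∀ᵐ ω ∂μ, T ω = S ω := by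
    intro T hTcl hTne hTEff hTS
    obtain ⟨gS, hgSm, hgSmem, hgScast⟩ := exists_castaing hSclosed hSne hSEffros
    obtain ⟨gT, hgTm, hgTmem, hgTcast⟩ := exists_castaing hTcl hTne hTEff
    have h1 : ∀ᵐ ω ∂μ, ∀ p : ℕ × ℕ, gS p ω ∈ T ω := by
      rw [ae_all_iff]
      intro p
      have hmem : gS p ∈ Selections μ T := by
        rw [hTS]
        exact ⟨hgSm p, Eventually.of_forall fun ω => hgSmem p ω⟩
      exact hmem.2
    have h2 : ∀ᵐ ω ∂μ, ∀ p : ℕ × ℕ, gT p ω ∈ S ω := by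
      rw [ae_all_iff]
      intro p
      have hmem : gT p ∈ Selections μ S := by
        rw [← hTS]
        exact ⟨hgTm p, Eventually.of_forall fun ω => hgTmem p ω⟩
      exact hmem.2
    filter_upwards [h1, h2] with ω hω1 hω2
    apply Subset.antisymm
    · rw [hgTcast ω]
      exact closure_minimal (range_subset_iff.2 fun p => hω2 p) (hSclosed ω)
    · rw [hgScast ω]
      exact closure_minimal (range_subset_iff.2 fun p => hω1 p) (hTcl ω)
  refine ⟨exists_representation hXmeas hXstable hXseqclosed, part2, ?_⟩
  intro Y hYmeas hYsat
  constructor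
  · rintro ⟨T, hTcl, hTne, hTEff, hTY⟩
    constructor
    · constructor
      · obtain ⟨sel, hselm, hselmem⟩ := exists_selection hTcl hTne hTEff
        exact ⟨sel, hTY ▸ (⟨hselm, Eventually.of_forall hselmem⟩ : sel ∈ Selections μ T)⟩
      · intro A hA z hz f hfm hcf
        rw [← hTY]
        refine ⟨hfm, ?_⟩
        have h1 : ∀ᵐ ω ∂μ, ∀ k, ω ∈ A k → f ω = z k ω := ae_all_iff.2 hcf
        have h2 : ∀ᵐ ω ∂μ, ∀ k, z k ω ∈ T ω := by
          rw [ae_all_iff]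
          intro k
          have hk := hz k
          rw [← hTY] at hk
          exact hk.2
        have h3 : ∀ᵐ ω ∂μ, ω ∈ ⋃ k, A k := by
          filter_upwards [measure_eq_zero_iff_ae_notMem.1 hA.2.2] with ω hω
          exact Set.notMem_compl_iff.1 hω
        filter_upwards [h1, h2, h3] with ω hω1 hω2 hω3
        obtain ⟨k, hk⟩ := mem_iUnion.1 hω3
        rw [hω1 k hk]
        exact hω2 k
    · intro x hxX f hfm hlim
      rw [← hTY]
      refine ⟨hfm, ?_⟩
      have h2 : ∀ᵐ ω ∂μ, ∀ m, x m ω ∈ T ω := by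
        rw [ae_all_iff]
        intro m
        have hm := hxX m
        rw [← hTY] at hm
        exact hm.2
      filter_upwards [h2, hlim] with ω hω2 hωl
      exact (hTcl ω).mem_of_tendsto hωl (Eventually.of_forall hω2)
  · rintro ⟨hYstable, hYseq⟩
    exact exists_representation hYmeas hYstable hYseq


end RandomSetPaper
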